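/- Let (M,g) be a pseudo-Riemannian manifold and k^a a conformal Killing vector. On the open set where g(k,k) ≠ 0, the conformally rescaled metric ĝ = |g(k,k)|^{-1} g makes k a Killing vector, i.e. k is Killing for ĝ. -/

import Mathlib

noncomputable section
open scoped BigOperators

/-- Partial derivative `∂ᵢ f` of a real-valued function on the chart `Fin n → ℝ`. -/
def pd {n : ℕ} (i : Fin n) (f : (Fin n → ℝ) → ℝ) (x : Fin n → ℝ) : ℝ :=
  fderiv ℝ f x (fun j => if j = i then (1 : ℝ) else 0)

/-- A pseudo-Riemannian metric on the global chart `Fin n → ℝ`. -/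
structure ChartPseudoMetric (n : ℕ) where
  g : (Fin n → ℝ) → Fin n → Fin n → ℝ
  ginv : (Fin n → ℝ) → Fin n → Fin n → ℝ
  symm : ∀ x a b, g x a b = g x b a
  invl : ∀ x a b, (∑ c, ginv x a c * g x c b) = if a = b then (1 : ℝ) else 0
  smooth_g : ∀ a b, ContDiff ℝ (⊤ : ℕ∞) fun x => g x a b
  smooth_ginv : ∀ a b, ContDiff ℝ (⊤ : ℕ∞) fun x => ginv x a b

namespace ChartPseudoMetric

variable {n : ℕ} (M : ChartPseudoMetric n)

/-- Christoffel symbols `Γ^a_{bc}` of the Levi-Civita connection. -/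
def Γ (x : Fin n → ℝ) (a b c : Fin n) : ℝ :=
  (1 / 2) * ∑ d, M.ginv x a d *
    (pd b (fun y => M.g y d c) x + pd c (fun y => M.g y d b) x - pd d (fun y => M.g y b c) x)

/-- Covariant derivative `∇_a k_b` of a 1-form. -/
def covD1 (k : (Fin n → ℝ) → Fin n → ℝ) (x : Fin n → ℝ) (a b : Fin n) : ℝ :=
  pd a (fun y => k y b) x - ∑ c, M.Γ x c a b * k x c

/-- Covariant derivative `∇_a v^b` of a vector field. -/
def covDvec (v : (Fin n → ℝ) → Fin n → ℝ) (x : Fin n → ℝ) (a b : Fin n) : ℝ :=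
  pd a (fun y => v y b) x + ∑ c, M.Γ x b a c * v x c

/-- Covariant derivative `∇_a k_{bc}` of a covariant 2-tensor. -/
def covD2 (k : (Fin n → ℝ) → Fin n → Fin n → ℝ) (x : Fin n → ℝ) (a b c : Fin n) : ℝ :=
  pd a (fun y => k y b c) x - (∑ d, M.Γ x d a b * k x d c) - ∑ d, M.Γ x d a c * k x b d

/-- Divergence `∇_a v^a` of a vector field. -/
def divVec (v : (Fin n → ℝ) → Fin n → ℝ) (x : Fin n → ℝ) : ℝ :=
  ∑ a, M.covDvec v x a a

/-- Laplacian `Δf = g^{ac} ∇_a ∇_c f` of a function. -/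
def lap0 (f : (Fin n → ℝ) → ℝ) (x : Fin n → ℝ) : ℝ :=
  ∑ a, ∑ c, M.ginv x a c * M.covD1 (fun y b => pd b f y) x a c

/-- Laplacian `Δk_b = g^{ac} ∇_a ∇_c k_b` of a 1-form. -/
def lap1 (k : (Fin n → ℝ) → Fin n → ℝ) (x : Fin n → ℝ) (b : Fin n) : ℝ :=
  ∑ a, ∑ c, M.ginv x a c * M.covD2 (fun y p q => M.covD1 k y p q) x a c b

/-- Riemann curvature `R_{ab}{}^c{}_d`, with the convention
`R_{ab}{}^c{}_d X^d = ∇_a ∇_b X^c - ∇_b ∇_a X^c`. -/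
def Riem (x : Fin n → ℝ) (a b c d : Fin n) : ℝ :=
  pd a (fun y => M.Γ y c b d) x - pd b (fun y => M.Γ y c a d) x
    + (∑ e, M.Γ x c a e * M.Γ x e b d) - ∑ e, M.Γ x c b e * M.Γ x e a d

/-- Ricci curvature `R_{bd} = R_{ab}{}^a{}_d`. -/
def Ricci (x : Fin n → ℝ) (b d : Fin n) : ℝ := ∑ a, M.Riem x a b a d

/-- Scalar curvature. -/
def scal (x : Fin n → ℝ) : ℝ := ∑ b, ∑ d, M.ginv x b d * M.Ricci x b d

/-- Trace of the Schouten tensor, `J = Scal/(2(n-1))`. -/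
def Jsc (x : Fin n → ℝ) : ℝ := (1 / (2 * ((n : ℝ) - 1))) * M.scal x

/-- Schouten tensor, `P_{ab} = (Ric_{ab} - J g_{ab})/(n-2)`. -/
def Schouten (x : Fin n → ℝ) (a b : Fin n) : ℝ :=
  (1 / ((n : ℝ) - 2)) * (M.Ricci x a b - M.Jsc x * M.g x a b)

end ChartPseudoMetric


namespace Helper
variable {n : ℕ}


variable {n : ℕ}

lemma pd_mul (i : Fin n) {f g : (Fin n → ℝ) → ℝ} {x : Fin n → ℝ}
    (hf : DifferentiableAt ℝ f x) (hg : DifferentiableAt ℝ g x) :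
    pd i (fun y => f y * g y) x = pd i f x * g x + f x * pd i g x := by
  unfold pd
  rw [fderiv_fun_mul hf hg]
  simp only [ContinuousLinearMap.add_apply, ContinuousLinearMap.smul_apply, smul_eq_mul]
  ring

lemma pd_sum {ι : Type*} (s : Finset ι) (F : ι → (Fin n → ℝ) → ℝ) (i : Fin n) (x : Fin n → ℝ)
    (h : ∀ j ∈ s, DifferentiableAt ℝ (F j) x) :
    pd i (fun y => ∑ j ∈ s, F j y) x = ∑ j ∈ s, pd i (F j) x := by
  unfold pd
  rw [fderiv_fun_sum h]
  simp [ContinuousLinearMap.sum_apply]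

lemma pd_neg (i : Fin n) (f : (Fin n → ℝ) → ℝ) (x : Fin n → ℝ) :
    pd i (fun y => -f y) x = -pd i f x := by
  unfold pd
  rw [fderiv_fun_neg]
  simp

lemma pd_inv (i : Fin n) {f : (Fin n → ℝ) → ℝ} {x : Fin n → ℝ}
    (hf : DifferentiableAt ℝ f x) (h0 : f x ≠ 0) :
    pd i (fun y => (f y)⁻¹) x = -((f x)^2)⁻¹ * pd i f x := by
  unfold pd
  rw [show (fun y => (f y)⁻¹) = Inv.inv ∘ f from rfl,
    fderiv_comp x (differentiableAt_inv h0) hf, fderiv_inv' h0]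
  simp only [ContinuousLinearMap.coe_comp', Function.comp_apply, ContinuousLinearMap.neg_apply,
    ContinuousLinearMap.mulLeftRight_apply]
  rw [sq, mul_inv]
  ring

lemma abs_inv_ev {f : (Fin n → ℝ) → ℝ} {x : Fin n → ℝ}
    (hf : ContinuousAt f x) (h0 : f x ≠ 0) :
    (fun y => |f y|⁻¹) =ᶠ[nhds x] (if 0 < f x then (fun y => (f y)⁻¹) else fun y => (-f y)⁻¹) := by
  rcases h0.lt_or_gt with hneg | hpos
  · rw [if_neg (not_lt.2 hneg.le)]
    filter_upwards [hf.eventually_lt_const hneg] with y hy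
    rw [abs_of_neg hy]
  · rw [if_pos hpos]
    filter_upwards [hf.eventually_const_lt hpos] with y hy
    rw [abs_of_pos hy]

lemma absinv_diff {f : (Fin n → ℝ) → ℝ} {x : Fin n → ℝ}
    (hf : DifferentiableAt ℝ f x) (h0 : f x ≠ 0) :
    DifferentiableAt ℝ (fun y => |f y|⁻¹) x := by
  have hev := abs_inv_ev hf.continuousAt h0
  rcases lt_or_ge 0 (f x) with hpos | hle
  · rw [if_pos hpos] at hev
    exact (hf.inv h0).congr_of_eventuallyEq hev
  · rw [if_neg (not_lt.2 hle)] at hev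
    exact (hf.neg.inv (neg_ne_zero.2 h0)).congr_of_eventuallyEq hev

lemma pd_absinv (i : Fin n) {f : (Fin n → ℝ) → ℝ} {x : Fin n → ℝ}
    (hf : DifferentiableAt ℝ f x) (h0 : f x ≠ 0) :
    pd i (fun y => |f y|⁻¹) x = -(f x)⁻¹ * |f x|⁻¹ * pd i f x := by
  have hev := abs_inv_ev hf.continuousAt h0
  rcases h0.lt_or_gt with hneg | hpos
  · rw [if_neg (not_lt.2 hneg.le)] at hev
    have : pd i (fun y => |f y|⁻¹) x = pd i (fun y => (-f y)⁻¹) x := by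
      unfold pd; rw [hev.fderiv_eq]
    rw [this, pd_inv i hf.fun_neg (by simpa using hneg.ne), pd_neg, abs_of_neg hneg]
    rw [sq, mul_inv, inv_neg]
    ring
  · rw [if_pos hpos] at hev
    have : pd i (fun y => |f y|⁻¹) x = pd i (fun y => (f y)⁻¹) x := by
      unfold pd; rw [hev.fderiv_eq]
    rw [this, pd_inv i hf h0, abs_of_pos hpos]
    rw [sq, mul_inv]
    ring

lemma sum_swap_outer (F : Fin n → Fin n → Fin n → ℝ) :
    ∑ a, ∑ b, ∑ c, F a b c = ∑ b, ∑ a, ∑ c, F a b c := Finset.sum_comm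

lemma sum_swap_inner (F : Fin n → Fin n → Fin n → ℝ) :
    ∑ a, ∑ b, ∑ c, F a b c = ∑ a, ∑ c, ∑ b, F a b c :=
  Finset.sum_congr rfl fun _ _ => Finset.sum_comm

lemma shuffle (K : Fin n → ℝ) (G : Fin n → Fin n → ℝ)
    (Dg : Fin n → Fin n → Fin n → ℝ) (Dk : Fin n → Fin n → ℝ) :
    ∑ c, ∑ a, ∑ b, (K c * (Dg c a b * K a * K b + G a b * Dk c a * K b + G a b * K a * Dk c b))
      = ∑ a, ∑ b, (K a * K b *
          ((∑ c, K c * Dg c a b) + (∑ c, G c b * Dk a c) + (∑ c, G a c * Dk b c))) := by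
  have lhs_split :
      ∑ c, ∑ a, ∑ b, (K c * (Dg c a b * K a * K b + G a b * Dk c a * K b + G a b * K a * Dk c b))
        = (∑ c, ∑ a, ∑ b, K c * (Dg c a b * K a * K b))
          + (∑ c, ∑ a, ∑ b, K c * (G a b * Dk c a * K b))
          + (∑ c, ∑ a, ∑ b, K c * (G a b * K a * Dk c b)) := by
    simp only [mul_add, Finset.sum_add_distrib]
  have rhs_split :
      ∑ a, ∑ b, (K a * K b *
          ((∑ c, K c * Dg c a b) + (∑ c, G c b * Dk a c) + (∑ c, G a c * Dk b c)))
        = (∑ a, ∑ b, ∑ c, K a * K b * (K c * Dg c a b))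
          + (∑ a, ∑ b, ∑ c, K a * K b * (G c b * Dk a c))
          + (∑ a, ∑ b, ∑ c, K a * K b * (G a c * Dk b c)) := by
    simp only [mul_add, Finset.mul_sum, Finset.sum_add_distrib]
  rw [lhs_split, rhs_split]
  have h1 : (∑ c, ∑ a, ∑ b, K c * (Dg c a b * K a * K b))
      = ∑ a, ∑ b, ∑ c, K a * K b * (K c * Dg c a b) := by
    rw [sum_swap_outer, sum_swap_inner]
    exact Finset.sum_congr rfl fun _ _ => Finset.sum_congr rfl fun _ _ =>
      Finset.sum_congr rfl fun _ _ => by ring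
  have h2 : (∑ c, ∑ a, ∑ b, K c * (G a b * Dk c a * K b))
      = ∑ a, ∑ b, ∑ c, K a * K b * (G c b * Dk a c) := by
    rw [sum_swap_inner (fun c a b => K c * (G a b * Dk c a * K b))]
    exact Finset.sum_congr rfl fun _ _ => Finset.sum_congr rfl fun _ _ =>
      Finset.sum_congr rfl fun _ _ => by ring
  have h3 : (∑ c, ∑ a, ∑ b, K c * (G a b * K a * Dk c b))
      = ∑ a, ∑ b, ∑ c, K a * K b * (G a c * Dk b c) := by
    rw [sum_swap_outer (fun c a b => K c * (G a b * K a * Dk c b))]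
    exact Finset.sum_congr rfl fun _ _ => Finset.sum_congr rfl fun _ _ =>
      Finset.sum_congr rfl fun _ _ => by ring
  rw [h1, h2, h3]

lemma sum_shape (f1 f2 f3 f4 r1 r2 r3 : Fin n → ℝ)
    (h : ∀ c, f1 c - f2 c + (f3 c - f4 c) = r1 c + r2 c + r3 c) :
    ((∑ c, f1 c) - ∑ c, f2 c) + ((∑ c, f3 c) - ∑ c, f4 c)
      = (∑ c, r1 c) + (∑ c, r2 c) + (∑ c, r3 c) := by
  simp only [← Finset.sum_sub_distrib, ← Finset.sum_add_distrib]
  exact Finset.sum_congr rfl fun c _ => h c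



variable (M : ChartPseudoMetric n)

lemma diff_g (a b : Fin n) (x : Fin n → ℝ) : DifferentiableAt ℝ (fun y => M.g y a b) x :=
  ((M.smooth_g a b).differentiable (by simp)).differentiableAt

lemma pdg_symm (i p q : Fin n) (x : Fin n → ℝ) :
    pd i (fun y => M.g y p q) x = pd i (fun y => M.g y q p) x := by
  rw [show (fun y => M.g y p q) = fun y => M.g y q p from funext fun y => M.symm y p q]

lemma invr (x : Fin n → ℝ) (a b : Fin n) :
    (∑ c, M.g x a c * M.ginv x c b) = if a = b then (1 : ℝ) else 0 := by
  have h1 : (Matrix.of fun p q => M.ginv x p q) * (Matrix.of fun p q => M.g x p q) = 1 := by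
    ext p q
    simp [Matrix.mul_apply, M.invl, Matrix.one_apply]
  have h2 := mul_eq_one_comm.mp h1
  have h3 := congrFun (congrFun h2 a) b
  simpa [Matrix.mul_apply, Matrix.one_apply] using h3

lemma gGamma (x : Fin n → ℝ) (a b d : Fin n) :
    (∑ c, M.g x d c * M.Γ x c a b)
      = (1/2) * (pd a (fun y => M.g y d b) x + pd b (fun y => M.g y d a) x
          - pd d (fun y => M.g y a b) x) := by
  unfold ChartPseudoMetric.Γ
  calc ∑ c, M.g x d c * ((1/2) * ∑ e, M.ginv x c e *
        (pd a (fun y => M.g y e b) x + pd b (fun y => M.g y e a) x - pd e (fun y => M.g y a b) x))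
      = ∑ c, ∑ e, (M.g x d c * M.ginv x c e) * ((1/2) *
        (pd a (fun y => M.g y e b) x + pd b (fun y => M.g y e a) x - pd e (fun y => M.g y a b) x)) := by
        simp only [Finset.mul_sum]
        exact Finset.sum_congr rfl fun c _ => Finset.sum_congr rfl fun e _ => by ring
    _ = ∑ e, (∑ c, M.g x d c * M.ginv x c e) * ((1/2) *
        (pd a (fun y => M.g y e b) x + pd b (fun y => M.g y e a) x - pd e (fun y => M.g y a b) x)) := by
        rw [Finset.sum_comm]
        exact Finset.sum_congr rfl fun e _ => by rw [Finset.sum_mul]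
    _ = ∑ e, (if d = e then (1:ℝ) else 0) * ((1/2) *
        (pd a (fun y => M.g y e b) x + pd b (fun y => M.g y e a) x - pd e (fun y => M.g y a b) x)) :=
        Finset.sum_congr rfl fun e _ => by rw [invr M x d e]
    _ = (1/2) * (pd a (fun y => M.g y d b) x + pd b (fun y => M.g y d a) x
          - pd d (fun y => M.g y a b) x) := by simp

variable (k kd : (Fin n → ℝ) → Fin n → ℝ)

lemma lie_eq (hk : ∀ c (x : Fin n → ℝ), DifferentiableAt ℝ (fun y => k y c) x)
    (hkd : ∀ x b, kd x b = ∑ c, M.g x b c * k x c) (x : Fin n → ℝ) (a b : Fin n) :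
    M.covD1 kd x a b + M.covD1 kd x b a
      = (∑ c, k x c * pd c (fun y => M.g y a b) x)
        + (∑ c, M.g x c b * pd a (fun y => k y c) x)
        + (∑ c, M.g x a c * pd b (fun y => k y c) x) := by
  have hpdkd : ∀ (i p : Fin n), pd i (fun y => kd y p) x
      = ∑ c, (pd i (fun y => M.g y p c) x * k x c + M.g x p c * pd i (fun y => k y c) x) := by
    intro i p
    rw [show (fun y => kd y p) = fun y => ∑ c, M.g y p c * k y c from funext fun y => hkd y p]
    rw [pd_sum _ _ _ _ (fun c _ => (diff_g M p c x).fun_mul (hk c x))]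
    exact Finset.sum_congr rfl fun c _ => pd_mul i (diff_g M p c x) (hk c x)
  have hGam : ∀ (p q : Fin n), (∑ c, M.Γ x c p q * kd x c)
      = ∑ c, (1/2) * (pd p (fun y => M.g y c q) x + pd q (fun y => M.g y c p) x
          - pd c (fun y => M.g y p q) x) * k x c := by
    intro p q
    have e1 : (∑ c, M.Γ x c p q * kd x c)
        = ∑ c, ∑ d, (M.g x d c * M.Γ x c p q) * k x d := by
      refine Finset.sum_congr rfl fun c _ => ?_
      rw [hkd x c, Finset.mul_sum]
      exact Finset.sum_congr rfl fun d _ => by rw [M.symm x c d]; ring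
    rw [e1, Finset.sum_comm]
    refine Finset.sum_congr rfl fun d _ => ?_
    rw [← Finset.sum_mul, gGamma M x p q d]
  simp only [ChartPseudoMetric.covD1, hpdkd, hGam]
  refine sum_shape _ _ _ _ _ _ _ (fun c => ?_)
  rw [pdg_symm M a c b, pdg_symm M b c a, pdg_symm M c b a, M.symm x b c]
  ring

end Helper

/-- if `k` is a conformal Killing vector, then on the set where
`q = g(k,k) ≠ 0` the vector field `k` is Killing for `ĝ = |g(k,k)|⁻¹ g`,
expressed via the vanishing of the Lie derivative of `ĝ` along `k`. -/
theorem ckv_killing_for_rescaled_metric {n : ℕ} (hn : 1 ≤ n) (M : ChartPseudoMetric n)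
    (k : (Fin n → ℝ) → Fin n → ℝ)
    (hk_smooth : ∀ a, ContDiff ℝ (⊤ : ℕ∞) fun x => k x a)
    (kd : (Fin n → ℝ) → Fin n → ℝ)
    (hkd : ∀ x b, kd x b = ∑ c, M.g x b c * k x c)
    (hCKV : ∀ x a b,
      M.covD1 kd x a b + M.covD1 kd x b a
        = (2 / (n : ℝ)) * M.divVec k x * M.g x a b)
    (q : (Fin n → ℝ) → ℝ)
    (hq : ∀ x, q x = ∑ a, ∑ b, M.g x a b * k x a * k x b) :
    ∀ x, q x ≠ 0 → ∀ a b,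
      (∑ c, k x c * pd c (fun y => |q y|⁻¹ * M.g y a b) x)
        + (∑ c, |q x|⁻¹ * M.g x c b * pd a (fun y => k y c) x)
        + (∑ c, |q x|⁻¹ * M.g x a c * pd b (fun y => k y c) x) = 0 := by
  intro x hqx a b
  have hgd : ∀ p q (x : Fin n → ℝ), DifferentiableAt ℝ (fun y => M.g y p q) x :=
    fun p q x => Helper.diff_g M p q x
  have hkdif : ∀ c (x : Fin n → ℝ), DifferentiableAt ℝ (fun y => k y c) x :=
    fun c x => ((hk_smooth c).differentiable (by simp)).differentiableAt
  have hqfun : q = fun y => ∑ a, ∑ b, M.g y a b * k y a * k y b := funext hq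
  have hqdiff : DifferentiableAt ℝ q x := by
    rw [hqfun]
    exact DifferentiableAt.fun_sum fun a _ => DifferentiableAt.fun_sum fun b _ =>
      ((hgd a b x).mul (hkdif a x)).mul (hkdif b x)
  have hLie : ∀ a b : Fin n, (∑ c, k x c * pd c (fun y => M.g y a b) x)
        + (∑ c, M.g x c b * pd a (fun y => k y c) x)
        + (∑ c, M.g x a c * pd b (fun y => k y c) x)
      = 2 / (n : ℝ) * M.divVec k x * M.g x a b :=
    fun a b => (Helper.lie_eq M k kd hkdif hkd x a b).symm.trans (hCKV x a b)
  have pdq : ∀ c, pd c q x = ∑ a, ∑ b, (pd c (fun y => M.g y a b) x * k x a * k x b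
      + M.g x a b * pd c (fun y => k y a) x * k x b
      + M.g x a b * k x a * pd c (fun y => k y b) x) := by
    intro c
    rw [hqfun]
    rw [Helper.pd_sum Finset.univ (fun a y => ∑ b, M.g y a b * k y a * k y b) c x
      (fun a _ => DifferentiableAt.fun_sum fun b _ => ((hgd a b x).mul (hkdif a x)).mul (hkdif b x))]
    refine Finset.sum_congr rfl fun p _ => ?_
    rw [Helper.pd_sum Finset.univ (fun b y => M.g y p b * k y p * k y b) c x
      (fun b _ => ((hgd p b x).mul (hkdif p x)).mul (hkdif b x))]
    refine Finset.sum_congr rfl fun r _ => ?_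
    rw [Helper.pd_mul c ((hgd p r x).fun_mul (hkdif p x)) (hkdif r x),
        Helper.pd_mul c (hgd p r x) (hkdif p x)]
    ring
  have hB : ∑ c, k x c * pd c q x = 2 / (n : ℝ) * M.divVec k x * q x := by
    calc ∑ c, k x c * pd c q x
        = ∑ c, ∑ a, ∑ b, (k x c * ((pd c (fun y => M.g y a b) x) * k x a * k x b
            + M.g x a b * pd c (fun y => k y a) x * k x b
            + M.g x a b * k x a * pd c (fun y => k y b) x)) := by
          refine Finset.sum_congr rfl fun c _ => ?_
          rw [pdq c]
          simp only [Finset.mul_sum]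
      _ = ∑ a, ∑ b, (k x a * k x b *
            ((∑ c, k x c * pd c (fun y => M.g y a b) x)
              + (∑ c, M.g x c b * pd a (fun y => k y c) x)
              + (∑ c, M.g x a c * pd b (fun y => k y c) x))) :=
          Helper.shuffle (k x) (fun a b => M.g x a b) (fun c a b => pd c (fun y => M.g y a b) x)
            (fun i c => pd i (fun y => k y c) x)
      _ = ∑ a, ∑ b, (k x a * k x b * (2 / (n : ℝ) * M.divVec k x * M.g x a b)) :=
          Finset.sum_congr rfl fun a _ => Finset.sum_congr rfl fun b _ => by rw [hLie a b]
      _ = 2 / (n : ℝ) * M.divVec k x * q x := by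
          rw [hq x]
          simp only [Finset.mul_sum]
          exact Finset.sum_congr rfl fun a _ => Finset.sum_congr rfl fun b _ => by ring
  have fdiff : DifferentiableAt ℝ (fun y => |q y|⁻¹) x := Helper.absinv_diff hqdiff hqx
  have hpd : ∀ c, pd c (fun y => |q y|⁻¹ * M.g y a b) x
      = (-(q x)⁻¹ * |q x|⁻¹ * pd c q x) * M.g x a b
        + |q x|⁻¹ * pd c (fun y => M.g y a b) x := by
    intro c
    rw [Helper.pd_mul c fdiff (hgd a b x), Helper.pd_absinv c hqdiff hqx]
  simp only [hpd]
  have e1 : ∑ c, k x c * ((-(q x)⁻¹ * |q x|⁻¹ * pd c q x) * M.g x a b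
        + |q x|⁻¹ * pd c (fun y => M.g y a b) x)
      = (-(q x)⁻¹ * |q x|⁻¹ * M.g x a b) * (∑ c, k x c * pd c q x)
        + |q x|⁻¹ * (∑ c, k x c * pd c (fun y => M.g y a b) x) := by
    rw [Finset.mul_sum, Finset.mul_sum, ← Finset.sum_add_distrib]
    exact Finset.sum_congr rfl fun c _ => by ring
  have e2 : ∑ c, |q x|⁻¹ * M.g x c b * pd a (fun y => k y c) x
      = |q x|⁻¹ * ∑ c, M.g x c b * pd a (fun y => k y c) x := by
    rw [Finset.mul_sum]; exact Finset.sum_congr rfl fun c _ => by ring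
  have e3 : ∑ c, |q x|⁻¹ * M.g x a c * pd b (fun y => k y c) x
      = |q x|⁻¹ * ∑ c, M.g x a c * pd b (fun y => k y c) x := by
    rw [Finset.mul_sum]; exact Finset.sum_congr rfl fun c _ => by ring
  rw [e1, e2, e3]
  have hinv : (q x)⁻¹ * q x = 1 := inv_mul_cancel₀ hqx
  linear_combination (-(q x)⁻¹ * |q x|⁻¹ * M.g x a b) * hB + |q x|⁻¹ * hLie a b
    + (-(2 / (n : ℝ) * M.divVec k x * |q x|⁻¹ * M.g x a b)) * hinv
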